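/- Let 𝓗 be a complex Hilbert space and ε > 0. Let H : ℝ → (𝓗 →L[ℂ] 𝓗) be continuous with each H(s) self-adjoint; let P, B : ℝ → (𝓗 →L[ℂ] 𝓗) be continuously differentiable with H(s)·P(s) = P(s)·H(s) and H(s)·B(s) - B(s)·H(s) = P'(s) for all s; let U : ℝ → (𝓗 →L[ℂ] 𝓗) be differentiable with U(0) = Id, U(t)*·U(t) = U(t)·U(t)* = Id for all t, and U'(t) = -i·H(ε·t)·U(t). Then for every t ≥ 0: U(t)·P(0)·U(t)* = P(ε·t) + i·ε·B(ε·t) - i·ε·U(t)·B(0)·U(t)* - i·ε² · ∫₀ᵗ U(t)·U(t')* · B'(ε·t') · U(t')·U(t)* dt'. -/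

import Mathlib

set_option maxHeartbeats 1000000 in
/-- Exact adiabatic expansion with first-order corrections: if `U` is the propagator of the
time-scaled Hamiltonian `H(εt)`, `P(s)` commutes with `H(s)` and `[H(s), B(s)] = P'(s)`, then
`U(t) P(0) U(t)* = P(εt) + iε B(εt) - iε U(t) B(0) U(t)* - iε² ∫₀ᵗ U(t)U(t')* B'(εt') U(t')U(t)* dt'`. -/
theorem stmt_9 {𝓗 : Type*} [NormedAddCommGroup 𝓗] [InnerProductSpace ℂ 𝓗] [CompleteSpace 𝓗]
    (ε : ℝ) (hε : 0 < ε)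
    (H P P' B B' U : ℝ → (𝓗 →L[ℂ] 𝓗))
    (hHcont : Continuous H) (hHsa : ∀ s : ℝ, IsSelfAdjoint (H s))
    (hP : ∀ s : ℝ, HasDerivAt P (P' s) s) (hP'cont : Continuous P')
    (hB : ∀ s : ℝ, HasDerivAt B (B' s) s) (hB'cont : Continuous B')
    (hcomm : ∀ s : ℝ, H s * P s = P s * H s)
    (hLiou : ∀ s : ℝ, H s * B s - B s * H s = P' s)
    (hU0 : U 0 = 1)
    (hUunitary : ∀ t : ℝ, ContinuousLinearMap.adjoint (U t) * U t = 1 ∧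
      U t * ContinuousLinearMap.adjoint (U t) = 1)
    (hU : ∀ t : ℝ, HasDerivAt U (-Complex.I • (H (ε * t) * U t)) t) :
    ∀ t : ℝ, 0 ≤ t →
      U t * P 0 * ContinuousLinearMap.adjoint (U t)
        = P (ε * t) + (Complex.I * (ε : ℂ)) • B (ε * t)
          - (Complex.I * (ε : ℂ)) • (U t * B 0 * ContinuousLinearMap.adjoint (U t))
          - (Complex.I * (ε : ℂ) ^ 2) •
              ∫ t' in (0:ℝ)..t,
                U t * ContinuousLinearMap.adjoint (U t') * B' (ε * t') * U t' *
                  ContinuousLinearMap.adjoint (U t) := by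
  have hstar : ∀ t : ℝ, ContinuousLinearMap.adjoint (U t) = star (U t) := fun t =>
    (ContinuousLinearMap.star_eq_adjoint (U t)).symm
  -- continuity of U
  have hUcont : Continuous U := by
    refine continuous_iff_continuousAt.2 fun t => (hU t).continuousAt
  have hAcont : Continuous (fun t => star (U t)) := hUcont.star
  -- derivative of star U
  have hA : ∀ t : ℝ, HasDerivAt (fun t => star (U t))
      (Complex.I • (star (U t) * H (ε * t))) t := by
    intro t
    have := (hU t).star
    simpa [star_smul, star_mul, (hHsa (ε * t)).star_eq] using this
  -- derivative of scaled functions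
  have hlin : ∀ t : ℝ, HasDerivAt (fun t : ℝ => ε * t) ε t := by
    intro t
    simpa using (hasDerivAt_id t).const_mul ε
  have hPc : ∀ t : ℝ, HasDerivAt (fun t => P (ε * t)) ((ε : ℂ) • P' (ε * t)) t := by
    intro t
    simpa [Complex.coe_smul, Function.comp_def] using (hP (ε * t)).scomp t (hlin t)
  have hBc : ∀ t : ℝ, HasDerivAt (fun t => B (ε * t)) ((ε : ℂ) • B' (ε * t)) t := by
    intro t
    simpa [Complex.coe_smul, Function.comp_def] using (hB (ε * t)).scomp t (hlin t)
  -- the integrand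
  set g : ℝ → (𝓗 →L[ℂ] 𝓗) := fun s => star (U s) * B' (ε * s) * U s with hg_def
  have hgcont : Continuous g := by
    exact (hAcont.mul (hB'cont.comp (continuous_const.mul continuous_id))).mul hUcont
  -- auxiliary functions
  set G : ℝ → (𝓗 →L[ℂ] 𝓗) := fun t => star (U t) * P (ε * t) * U t with hG_def
  set K : ℝ → (𝓗 →L[ℂ] 𝓗) := fun t => star (U t) * B (ε * t) * U t with hK_def
  set F : ℝ → (𝓗 →L[ℂ] 𝓗) := fun t =>
    G t + (Complex.I * (ε : ℂ)) • K t
      - (Complex.I * (ε : ℂ) ^ 2) • ∫ s in (0:ℝ)..t, g s with hF_def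
  have hG' : ∀ t : ℝ, HasDerivAt G ((ε : ℂ) • (star (U t) * P' (ε * t) * U t)) t := by
    intro t
    have h1 := ((hA t).mul (hPc t)).mul (hU t)
    refine h1.congr_deriv ?_
    symm
    have key : star (U t) * (H (ε * t) * (P (ε * t) * U t))
        = star (U t) * (P (ε * t) * (H (ε * t) * U t)) := by
      rw [← mul_assoc (H (ε * t)), hcomm, mul_assoc]
    simp only [neg_smul, smul_neg, mul_neg, neg_mul, smul_mul_assoc, mul_smul_comm, mul_assoc,
      add_mul, Pi.mul_apply]
    rw [key]
    module
  have hK' : ∀ t : ℝ, HasDerivAt K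
      (Complex.I • (star (U t) * P' (ε * t) * U t) + (ε : ℂ) • g t) t := by
    intro t
    have h1 := ((hA t).mul (hBc t)).mul (hU t)
    refine h1.congr_deriv ?_
    symm
    have key : star (U t) * (P' (ε * t) * U t)
        = star (U t) * (H (ε * t) * (B (ε * t) * U t))
          - star (U t) * (B (ε * t) * (H (ε * t) * U t)) := by
      rw [← mul_sub, ← mul_assoc (H (ε * t)), ← mul_assoc (B (ε * t)), ← sub_mul, hLiou]
    simp only [hg_def, neg_smul, smul_neg, mul_neg, neg_mul, smul_mul_assoc, mul_smul_comm,
      mul_assoc, add_mul, Pi.mul_apply]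
    rw [key]
    module
  haveI : SecondCountableTopologyEither ℝ (𝓗 →L[ℂ] 𝓗) :=
    secondCountableTopologyEither_of_left ℝ _
  have hIint : ∀ t : ℝ, HasDerivAt (fun t => ∫ s in (0:ℝ)..t, g s) (g t) t := by
    intro t
    exact intervalIntegral.integral_hasDerivAt_right (hgcont.intervalIntegrable 0 t)
      (hgcont.stronglyMeasurableAtFilter _ _) hgcont.continuousAt
  have hF' : ∀ t : ℝ, HasDerivAt F 0 t := by
    intro t
    have h1 := ((hG' t).add ((hK' t).const_smul (Complex.I * (ε : ℂ)))).sub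
      ((hIint t).const_smul (Complex.I * (ε : ℂ) ^ 2))
    refine h1.congr_deriv ?_
    symm
    simp only [smul_add, smul_smul]
    match_scalars <;>
    · ring_nf
      try simp [Complex.I_sq]
  have hFconst : ∀ t : ℝ, F t = F 0 := by
    intro t
    exact is_const_of_deriv_eq_zero (fun x => (hF' x).differentiableAt)
      (fun x => (hF' x).deriv) t 0
  intro t _
  have hF0 : F 0 = P 0 + (Complex.I * (ε : ℂ)) • B 0 := by
    simp [hF_def, hG_def, hK_def, hU0, intervalIntegral.integral_same]
  have ht := hFconst t
  rw [hF0] at ht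
  -- solve for P 0
  have hP0 : P 0 = star (U t) * P (ε * t) * U t
      + (Complex.I * (ε : ℂ)) • (star (U t) * B (ε * t) * U t)
      - (Complex.I * (ε : ℂ) ^ 2) • (∫ s in (0:ℝ)..t, g s)
      - (Complex.I * (ε : ℂ)) • B 0 := by
    have := ht
    simp only [hF_def, hG_def, hK_def] at this
    rw [this]
    abel
  have hu1 : star (U t) * U t = 1 := by rw [← hstar]; exact (hUunitary t).1
  have hu2 : U t * star (U t) = 1 := by rw [← hstar]; exact (hUunitary t).2
  -- conjugation kills star U ... U
  have hconj : ∀ X : 𝓗 →L[ℂ] 𝓗, U t * (star (U t) * X * U t) * star (U t) = X := by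
    intro X
    calc U t * (star (U t) * X * U t) * star (U t)
        = (U t * star (U t)) * X * (U t * star (U t)) := by simp only [mul_assoc]
      _ = X := by rw [hu2, one_mul, mul_one]
  -- conjugating the integral
  set φ : (𝓗 →L[ℂ] 𝓗) →L[ℂ] (𝓗 →L[ℂ] 𝓗) :=
    (ContinuousLinearMap.mul ℂ (𝓗 →L[ℂ] 𝓗) (U t)).comp
      ((ContinuousLinearMap.mul ℂ (𝓗 →L[ℂ] 𝓗)).flip (star (U t))) with hφ_def
  have hφ_apply : ∀ X, φ X = U t * X * star (U t) := by
    intro X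
    simp [hφ_def, ContinuousLinearMap.mul_apply', mul_assoc]
  have hintconj : U t * (∫ s in (0:ℝ)..t, g s) * star (U t)
      = ∫ s in (0:ℝ)..t, U t * star (U s) * B' (ε * s) * U s * star (U t) := by
    rw [← hφ_apply, ← φ.intervalIntegral_comp_comm (hgcont.intervalIntegrable 0 t)]
    refine intervalIntegral.integral_congr fun s _ => ?_
    rw [hφ_apply]
    simp [hg_def, mul_assoc]
  simp only [hstar]
  rw [hP0]
  simp only [mul_sub, sub_mul, mul_add, add_mul, mul_smul_comm, smul_mul_assoc]
  rw [hconj (P (ε * t)), hconj (B (ε * t)), hintconj]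
  rw [show U t * B 0 * star (U t) = U t * star (U t) * (U t * B 0 * star (U t)) by
    rw [hu2, one_mul]]
  abel
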